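/- Let u be a function on a convex open set Ω ⊆ ℝⁿ. Then u is C¹ with Du Lipschitz with constant λ if and only if both u + (λ/2)|x|² and −u + (λ/2)|x|² are convex on Ω. -/

import Mathlib

open Topology Pointwise

abbrev SymMat (n : ℕ) : Type := selfAdjoint (Matrix (Fin n) (Fin n) ℝ)

def PSD (n : ℕ) : Set (SymMat n) := {A | (A : Matrix (Fin n) (Fin n) ℝ).PosSemidef}

def dual {n : ℕ} (F : Set (SymMat n)) : Set (SymMat n) := {A | -A ∉ interior F}


variable {E : Type*} [NormedAddCommGroup E] [NormedSpace ℝ E] [FiniteDimensional ℝ E]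

lemma aux_subgradient {Ω : Set E} (hΩ : IsOpen Ω) (hconv : Convex ℝ Ω)
    {f : E → ℝ} (hf : ConvexOn ℝ Ω f) {x : E} (hx : x ∈ Ω) :
    ∃ L : E →L[ℝ] ℝ, ∀ z ∈ Ω, f x + L (z - x) ≤ f z := by
  have hcont : ContinuousOn f Ω := hf.continuousOn hΩ
  set S : Set (E × ℝ) := {p | p.1 ∈ Ω ∧ f p.1 < p.2} with hS
  have hSopen : IsOpen S := by
    rw [isOpen_iff_mem_nhds]
    rintro ⟨z, t⟩ ⟨hz, hzt⟩
    have hc : ContinuousAt f z := hcont.continuousAt (hΩ.mem_nhds hz)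
    have h1 : ContinuousAt (fun p : E × ℝ => p.2 - f p.1) (z, t) :=
      continuousAt_snd.sub (hc.comp continuousAt_fst)
    have h2 : {p : E × ℝ | 0 < p.2 - f p.1} ∈ 𝓝 (z, t) :=
      h1.preimage_mem_nhds (isOpen_Ioi.mem_nhds (by simpa using hzt))
    have h3 : {p : E × ℝ | p.1 ∈ Ω} ∈ 𝓝 (z, t) :=
      continuousAt_fst.preimage_mem_nhds (hΩ.mem_nhds hz)
    filter_upwards [h2, h3] with p hp1 hp2
    exact ⟨hp2, by linarith [hp1]⟩
  have hSconv : Convex ℝ S := by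
    rintro ⟨z, t⟩ ⟨hz, hzt⟩ ⟨w, s⟩ ⟨hw, hws⟩ a b ha hb hab
    refine ⟨hconv hz hw ha hb hab, ?_⟩
    have := hf.2 hz hw ha hb hab
    have h2 : a * f z + b * f w < a * t + b * s := by
      rcases lt_or_ge 0 a with ha' | ha'
      · have : a * f z < a * t := by nlinarith
        nlinarith [mul_le_mul_of_nonneg_left hws.le hb]
      · have ha0 : a = 0 := le_antisymm ha' ha
        have hb1 : b = 1 := by linarith
        simp [ha0, hb1, hws]
    calc f (a • z + b • w) ≤ a * f z + b * f w := by simpa using this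
      _ < _ := h2
  have hnot : (x, f x) ∉ S := by simp [hS]
  obtain ⟨g, hg⟩ := geometric_hahn_banach_open_point hSconv hSopen hnot
  set A : E →L[ℝ] ℝ := g.comp (ContinuousLinearMap.inl ℝ E ℝ) with hA
  set c : ℝ := g (0, 1) with hc
  have hsplit : ∀ z t, g (z, t) = A z + t * c := by
    intro z t
    have : (z, t) = (z, (0:ℝ)) + t • ((0:E), (1:ℝ)) := by
      simp [Prod.ext_iff]
    rw [this, map_add, map_smul]
    simp [hA, hc, ContinuousLinearMap.inl_apply]
  -- g a < g (x, f x) for all a in S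
  have hK : ∀ z ∈ Ω, ∀ t, f z < t → A z + t * c < A x + f x * c := by
    intro z hz t ht
    have := hg (z, t) ⟨hz, ht⟩
    rwa [hsplit, hsplit] at this
  -- c < 0
  have hcneg : c < 0 := by
    have := hK x hx (f x + 1) (by linarith)
    nlinarith
  -- limit: A z + f z * c ≤ A x + f x * c for z in Ω
  have hK2 : ∀ z ∈ Ω, A z + f z * c ≤ A x + f x * c := by
    intro z hz
    have h : ∀ ε > (0:ℝ), A z + f z * c ≤ A x + f x * c + ε := by
      intro ε hε
      have := hK z hz (f z + ε / (-c)) (lt_add_of_pos_right _ (div_pos hε (neg_pos.mpr hcneg)))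
      have hcalc : (f z + ε / (-c)) * c = f z * c - ε := by
        have hcne : c ≠ 0 := ne_of_lt hcneg
        rw [add_mul, div_mul_eq_mul_div, div_neg, mul_div_assoc, div_self hcne, mul_one]
        ring
      nlinarith
    linarith [le_of_forall_pos_le_add h]
  refine ⟨(-c⁻¹) • A, fun z hz => ?_⟩
  have h1 := hK2 z hz
  have h2 : ((-c⁻¹) • A) (z - x) = -c⁻¹ * (A z - A x) := by
    simp [map_sub, smul_eq_mul]
    ring
  rw [h2]
  have hcne : c ≠ 0 := ne_of_lt hcneg
  have h3 : A z - A x ≤ (f x - f z) * c := by linarith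
  have h4 : (A x - A z) / c ≤ f z - f x := by
    rw [div_le_iff_of_neg hcneg]; linarith
  have h5 : -c⁻¹ * (A z - A x) = (A x - A z) / c := by
    rw [div_eq_mul_inv]; ring
  linarith

variable {F : Type*} [NormedAddCommGroup F] [InnerProductSpace ℝ F] [FiniteDimensional ℝ F]

local notation "⟪" x ", " y "⟫" => @inner ℝ _ _ x y

set_option maxHeartbeats 2000000 in
lemma aux_diff {Ω : Set F} (hΩ : IsOpen Ω) (hconv : Convex ℝ Ω) {lam : ℝ} (hlam : 0 ≤ lam)
    {u : F → ℝ}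
    (hg : ConvexOn ℝ Ω (fun x => u x + lam / 2 * ‖x‖ ^ 2))
    (hh : ConvexOn ℝ Ω (fun x => -u x + lam / 2 * ‖x‖ ^ 2))
    {x : F} (hx : x ∈ Ω) :
    ∃ L : F →L[ℝ] ℝ, HasFDerivAt u L x ∧
      ∀ z ∈ Ω, |u z - u x - L (z - x)| ≤ lam / 2 * ‖z - x‖ ^ 2 := by
  obtain ⟨Lg, hLg⟩ := aux_subgradient hΩ hconv hg hx
  obtain ⟨Lh, hLh⟩ := aux_subgradient hΩ hconv hh hx
  have hq : ∀ z : F, lam / 2 * ‖z‖ ^ 2 - lam / 2 * ‖x‖ ^ 2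
      = lam * ⟪x, z - x⟫ + lam / 2 * ‖z - x‖ ^ 2 := by
    intro z
    have h1 : ‖z‖ ^ 2 = ‖x‖ ^ 2 + 2 * ⟪x, z - x⟫ + ‖z - x‖ ^ 2 := by
      have := norm_add_sq_real x (z - x)
      rwa [add_sub_cancel] at this
    rw [h1]; ring
  set a : F →L[ℝ] ℝ := lam • (innerSL ℝ x) with ha
  have haw : ∀ w : F, a w = lam * ⟪x, w⟫ := by
    intro w; simp [ha, smul_eq_mul]
  set L₁ : F →L[ℝ] ℝ := Lg - a with hL₁
  set L₂ : F →L[ℝ] ℝ := a - Lh with hL₂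
  have hlow : ∀ z ∈ Ω, u x + L₁ (z - x) - lam / 2 * ‖z - x‖ ^ 2 ≤ u z := by
    intro z hz
    have := hLg z hz
    have h2 : L₁ (z - x) = Lg (z - x) - lam * ⟪x, z - x⟫ := by
      simp [hL₁, haw]
    have h3 := hq z
    linarith
  have hupp : ∀ z ∈ Ω, u z ≤ u x + L₂ (z - x) + lam / 2 * ‖z - x‖ ^ 2 := by
    intro z hz
    have := hLh z hz
    have h2 : L₂ (z - x) = lam * ⟪x, z - x⟫ - Lh (z - x) := by
      simp [hL₂, haw]
    have h3 := hq z
    linarith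
  have hEq : L₁ = L₂ := by
    have hkey : ∀ v : F, L₁ v - L₂ v ≤ 0 := by
      intro v
      obtain ⟨ε, hε, hball⟩ := Metric.isOpen_iff.1 hΩ x hx
      have hmain : ∀ t : ℝ, 0 < t → t < ε / (‖v‖ + 1) → L₁ v - L₂ v ≤ lam * t * ‖v‖ ^ 2 := by
        intro t ht ht'
        have hz : x + t • v ∈ Ω := by
          apply hball
          rw [Metric.mem_ball, dist_eq_norm, add_sub_cancel_left, norm_smul,
            Real.norm_eq_abs, abs_of_pos ht]
          calc t * ‖v‖ ≤ t * (‖v‖ + 1) := by nlinarith [norm_nonneg v]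
            _ < ε / (‖v‖ + 1) * (‖v‖ + 1) := by
                apply mul_lt_mul_of_pos_right ht' (by positivity)
            _ = ε := by field_simp
        have h1 := hlow (x + t • v) hz
        have h2 := hupp (x + t • v) hz
        rw [add_sub_cancel_left] at h1 h2
        have h3 : L₁ (t • v) = t * L₁ v := by simp
        have h4 : L₂ (t • v) = t * L₂ v := by simp
        have h5 : ‖t • v‖ ^ 2 = t ^ 2 * ‖v‖ ^ 2 := by
          rw [norm_smul, Real.norm_eq_abs, mul_pow, sq_abs]
        have h6 : t * L₁ v - t * L₂ v ≤ lam * (t ^ 2 * ‖v‖ ^ 2) := by nlinarith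
        have h7 : t * (L₁ v - L₂ v) ≤ t * (lam * t * ‖v‖ ^ 2) := by nlinarith
        exact le_of_mul_le_mul_left h7 ht
      have : ∀ δ > (0:ℝ), L₁ v - L₂ v ≤ 0 + δ := by
        intro δ hδ
        set t := min (ε / (‖v‖ + 1) / 2) (δ / (lam * ‖v‖ ^ 2 + 1)) with htdef
        have ht1 : 0 < ε / (‖v‖ + 1) / 2 := by positivity
        have ht2 : 0 < δ / (lam * ‖v‖ ^ 2 + 1) := by positivity
        have ht : 0 < t := lt_min ht1 ht2
        have ht' : t < ε / (‖v‖ + 1) := lt_of_le_of_lt (min_le_left _ _) (by linarith)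
        have := hmain t ht ht'
        have hb : lam * t * ‖v‖ ^ 2 ≤ δ := by
          have h8 : t ≤ δ / (lam * ‖v‖ ^ 2 + 1) := min_le_right _ _
          have h9 : 0 < lam * ‖v‖ ^ 2 + 1 := by positivity
          rw [le_div_iff₀ h9] at h8
          nlinarith
        linarith
      linarith [le_of_forall_pos_le_add this]
    ext v
    have h1 := hkey v
    have h2 := hkey (-v)
    simp only [map_neg] at h2
    linarith
  refine ⟨L₁, ?_, ?_⟩
  · rw [hasFDerivAt_iff_isLittleO, Asymptotics.isLittleO_iff]
    intro c hc
    have h1 : Ω ∈ 𝓝 x := hΩ.mem_nhds hx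
    have h2 : Metric.ball x (2 * c / (lam + 1)) ∈ 𝓝 x :=
      Metric.ball_mem_nhds x (by positivity)
    filter_upwards [h1, h2] with z hz hz'
    rw [Metric.mem_ball, dist_eq_norm] at hz'
    have h3 := hlow z hz
    have h4 := hupp z hz
    rw [hEq] at h3
    have h5 : |u z - u x - L₂ (z - x)| ≤ lam / 2 * ‖z - x‖ ^ 2 := by
      rw [abs_le]; constructor <;> linarith
    rw [hEq, Real.norm_eq_abs]
    calc |u z - u x - L₂ (z - x)| ≤ lam / 2 * ‖z - x‖ ^ 2 := h5
      _ ≤ c * ‖z - x‖ := by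
          have h6 : ‖z - x‖ * (lam + 1) < 2 * c := (lt_div_iff₀ (by positivity)).1 hz'
          nlinarith [norm_nonneg (z - x), mul_le_mul_of_nonneg_left h6.le (norm_nonneg (z - x))]
  · intro z hz
    have h3 := hlow z hz
    have h4 := hupp z hz
    rw [hEq] at h3
    rw [abs_le]; constructor <;> [skip; skip] <;> rw [hEq] <;> linarith

set_option maxHeartbeats 2000000 in
lemma aux_local {Ω : Set F} {lam : ℝ} (hlam : 0 ≤ lam) {u : F → ℝ}
    {x y : F} (Lx Ly : F →L[ℝ] ℝ)
    (hx' : ∀ z ∈ Ω, |u z - u x - Lx (z - x)| ≤ lam / 2 * ‖z - x‖ ^ 2)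
    (hy' : ∀ z ∈ Ω, |u z - u y - Ly (z - y)| ≤ lam / 2 * ‖z - y‖ ^ 2)
    (hxy : x ≠ y)
    (hball : Metric.closedBall (x + (1/2 : ℝ) • (y - x)) (‖y - x‖ / 2) ⊆ Ω) :
    ‖Lx - Ly‖ ≤ lam * ‖x - y‖ := by
  set e : F := (InnerProductSpace.toDual ℝ F).symm (Lx - Ly) with hedef
  have he : ∀ w, (Lx - Ly) w = ⟪e, w⟫ := fun w =>
    (InnerProductSpace.toDual_symm_apply).symm
  have hne : ‖e‖ = ‖Lx - Ly‖ := LinearIsometryEquiv.norm_map _ _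
  rcases eq_or_ne e 0 with h0 | h0
  · rw [← hne, h0, norm_zero]
    positivity
  set r : ℝ := ‖y - x‖ with hrdef
  have hr : 0 < r := by
    rw [hrdef, norm_pos_iff, sub_ne_zero]
    exact hxy.symm
  have hepos : 0 < ‖e‖ := norm_pos_iff.2 h0
  set d : F := y - x with hddef
  set eh : F := ‖e‖⁻¹ • e with hehdef
  have hehnorm : ‖eh‖ = 1 := by
    rw [hehdef, norm_smul, Real.norm_eq_abs, abs_of_pos (by positivity)]
    field_simp
  have hehinner : ⟪e, eh⟫ = ‖e‖ := by
    rw [hehdef, real_inner_smul_right, real_inner_self_eq_norm_sq]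
    field_simp
  set t : ℝ := r / 2 with htdef
  have ht : 0 < t := by positivity
  set m : F := x + (1/2 : ℝ) • d with hmdef
  set z₁ : F := m + t • eh with hz₁def
  set z₂ : F := m - t • eh with hz₂def
  have hteh : ‖t • eh‖ = t := by
    rw [norm_smul, Real.norm_eq_abs, abs_of_pos ht, hehnorm, mul_one]
  have hz₁ : z₁ ∈ Ω := by
    apply hball
    rw [Metric.mem_closedBall, dist_eq_norm]
    have : z₁ - m = t • eh := by rw [hz₁def]; abel
    rw [this, hteh]
  have hz₂ : z₂ ∈ Ω := by
    apply hball
    rw [Metric.mem_closedBall, dist_eq_norm]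
    have : z₂ - m = -(t • eh) := by rw [hz₂def]; abel
    rw [this, norm_neg, hteh]
  set s : ℝ := ⟪d, eh⟫ with hsdef
  -- vector identities
  have hv1 : z₁ - x = (1/2 : ℝ) • d + t • eh := by rw [hz₁def, hmdef]; abel
  have hv2 : z₁ - y = t • eh - (1/2 : ℝ) • d := by
    rw [hz₁def, hmdef, hddef]; module
  have hv3 : z₂ - x = (1/2 : ℝ) • d - t • eh := by rw [hz₂def, hmdef]; abel
  have hv4 : z₂ - y = -((1/2 : ℝ) • d + t • eh) := by
    rw [hz₂def, hmdef, hddef]; module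
  have hdn : ‖(1/2 : ℝ) • d‖ ^ 2 = r ^ 2 / 4 := by
    rw [norm_smul, Real.norm_eq_abs, mul_pow]
    rw [show |(1/2 : ℝ)| = 1/2 by norm_num]
    rw [← hrdef]; ring
  have htn : ‖t • eh‖ ^ 2 = t ^ 2 := by rw [hteh]
  have hin : ⟪(1/2 : ℝ) • d, t • eh⟫ = 1/2 * (t * s) := by
    rw [real_inner_smul_left, real_inner_smul_right, ← hsdef]
  -- norm computations
  have hn1 : ‖z₁ - x‖ ^ 2 = r ^ 2 / 4 + t * s + t ^ 2 := by
    rw [hv1, norm_add_sq_real, hdn, htn, hin]; ring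
  have hn2 : ‖z₁ - y‖ ^ 2 = t ^ 2 - t * s + r ^ 2 / 4 := by
    rw [hv2, norm_sub_sq_real, hdn, htn, real_inner_comm, hin]; ring
  have hn3 : ‖z₂ - x‖ ^ 2 = r ^ 2 / 4 - t * s + t ^ 2 := by
    rw [hv3, norm_sub_sq_real, hdn, htn, hin]; ring
  have hn4 : ‖z₂ - y‖ ^ 2 = r ^ 2 / 4 + t * s + t ^ 2 := by
    rw [hv4, norm_neg, norm_add_sq_real, hdn, htn, hin]; ring
  -- linear functional identity
  have hL : Lx (z₁ - x) - Lx (z₂ - x) - (Ly (z₁ - y) - Ly (z₂ - y)) = r * ‖e‖ := by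
    have h1 : Lx (z₁ - x) - Lx (z₂ - x) = Lx (z₁ - z₂) := by
      rw [← map_sub]; congr 1; abel
    have h2 : Ly (z₁ - y) - Ly (z₂ - y) = Ly (z₁ - z₂) := by
      rw [← map_sub]; congr 1; abel
    have h3 : z₁ - z₂ = r • eh := by
      rw [hz₁def, hz₂def, htdef]; module
    rw [h1, h2, h3]
    have h4 : Lx (r • eh) - Ly (r • eh) = (Lx - Ly) (r • eh) := by simp; ring
    rw [h4, he, real_inner_smul_right, hehinner]
  -- the four inequalities
  have ha := (abs_le.1 (hx' z₁ hz₁)).1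
  have hb := (abs_le.1 (hy' z₁ hz₁)).2
  have hc := (abs_le.1 (hy' z₂ hz₂)).1
  have hd := (abs_le.1 (hx' z₂ hz₂)).2
  rw [hn1] at ha
  rw [hn2] at hb
  rw [hn4] at hc
  rw [hn3] at hd
  -- combine
  have hfinal : r * ‖e‖ ≤ lam * r ^ 2 := by
    rw [← hL]
    have ht2 : t ^ 2 = r ^ 2 / 4 := by rw [htdef]; ring
    nlinarith [ha, hb, hc, hd]
  have hxy' : ‖x - y‖ = r := by rw [hrdef, norm_sub_rev]
  rw [← hne, hxy']
  have := mul_le_mul_of_nonneg_left hfinal (le_of_lt (inv_pos.2 hr))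
  calc ‖e‖ = r⁻¹ * (r * ‖e‖) := by field_simp
    _ ≤ r⁻¹ * (lam * r ^ 2) := this
    _ = lam * r := by field_simp

set_option maxHeartbeats 2000000 in
lemma aux_global {Ω : Set F} (hΩ : IsOpen Ω) (hconv : Convex ℝ Ω) {lam : ℝ} (hlam : 0 ≤ lam)
    {u : F → ℝ} (P : F → F →L[ℝ] ℝ)
    (hP : ∀ x ∈ Ω, ∀ z ∈ Ω, |u z - u x - P x (z - x)| ≤ lam / 2 * ‖z - x‖ ^ 2)
    {x y : F} (hx : x ∈ Ω) (hy : y ∈ Ω) : ‖P x - P y‖ ≤ lam * ‖x - y‖ := by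
  rcases eq_or_ne x y with rfl | hne
  · simp
  set d : F := y - x with hddef
  set r : ℝ := ‖x - y‖ with hrdef
  have hdr : ‖d‖ = r := by rw [hddef, hrdef, norm_sub_rev]
  have hr : 0 < r := by rw [hrdef, norm_pos_iff, sub_ne_zero]; exact hne
  -- segment and thickening
  have hseg : segment ℝ x y ⊆ Ω := hconv.segment_subset hx hy
  have hsegc : IsCompact (segment ℝ x y) := by
    rw [segment_eq_image' ℝ x y]
    exact (isCompact_Icc).image (by continuity)
  obtain ⟨δ, hδ, hthick⟩ := hsegc.exists_thickening_subset_open hΩ hseg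
  have hballs : ∀ p ∈ segment ℝ x y, ∀ ρ : ℝ, ρ < δ → Metric.closedBall p ρ ⊆ Ω := by
    intro p hp ρ hρ w hw
    apply hthick
    rw [Metric.mem_thickening_iff]
    exact ⟨p, hp, lt_of_le_of_lt (Metric.mem_closedBall.1 hw) hρ⟩
  -- choose N
  obtain ⟨N₀, hN₀⟩ := exists_nat_gt (r / (2 * δ))
  set N : ℕ := N₀ + 1 with hNdef
  have hNpos : 0 < (N : ℝ) := by positivity
  have hNgt : r / (2 * δ) < N := lt_of_lt_of_le hN₀ (by exact_mod_cast Nat.le_succ N₀)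
  have hstep : r / (2 * N) < δ := by
    rw [div_lt_iff₀ (by positivity)] at hNgt ⊢
    · linarith
  clear_value N
  -- the chain of points
  set c : ℕ → F := fun i => x + ((i : ℝ) / N) • d with hcdef
  have hmemIcc : ∀ i : ℕ, i ≤ N → (i : ℝ) / N ∈ Set.Icc (0:ℝ) 1 := by
    intro i hi
    constructor
    · positivity
    · rw [div_le_one hNpos]; exact_mod_cast hi
  have hcseg : ∀ i : ℕ, i ≤ N → c i ∈ segment ℝ x y := by
    intro i hi
    rw [segment_eq_image' ℝ x y]
    exact ⟨(i : ℝ) / N, hmemIcc i hi, rfl⟩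
  have hcΩ : ∀ i : ℕ, i ≤ N → c i ∈ Ω := fun i hi => hseg (hcseg i hi)
  -- step estimate
  have hstepest : ∀ i : ℕ, i < N → ‖P (c i) - P (c (i + 1))‖ ≤ lam * (r / N) := by
    intro i hi
    have hi1 : i + 1 ≤ N := hi
    have hci : c i ∈ Ω := hcΩ i (le_of_lt hi)
    have hci1 : c (i + 1) ∈ Ω := hcΩ (i + 1) hi1
    have hdiff : c (i + 1) - c i = (1 / (N : ℝ)) • d := by
      rw [hcdef]
      simp only [Nat.cast_add, Nat.cast_one]
      module
    have hnd : ‖c (i + 1) - c i‖ = r / N := by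
      rw [hdiff, norm_smul, Real.norm_eq_abs, abs_of_pos (by positivity), hdr]
      ring
    have hnexy : c i ≠ c (i + 1) := by
      intro h
      have : c (i + 1) - c i = 0 := by rw [h]; abel
      rw [hdiff] at this
      have hd0 : d ≠ 0 := by rw [hddef, sub_ne_zero]; exact hne.symm
      exact hd0 (by
        have := smul_eq_zero.1 this
        rcases this with h' | h'
        · exact absurd h' (by positivity)
        · exact h')
    -- midpoint ball
    have hmid : c i + (1/2 : ℝ) • (c (i + 1) - c i) ∈ segment ℝ x y := by
      rw [hdiff, segment_eq_image' ℝ x y]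
      refine ⟨(i : ℝ) / N + 1 / (2 * N), ?_, ?_⟩
      · constructor
        · positivity
        · have h1 : (i : ℝ) + 1 ≤ N := by exact_mod_cast hi1
          have hN0 : (N : ℝ) ≠ 0 := ne_of_gt hNpos
          have h2N : (2 * (N : ℝ)) ≠ 0 := by positivity
          have e1 : (i : ℝ) / N + 1 / (2 * N)
              = ((i : ℝ) * (2 * N) + N * 1) / ((N : ℝ) * (2 * N)) := div_add_div _ _ hN0 h2N
          rw [e1, div_le_one (by positivity)]
          nlinarith
      · rw [hcdef]
        simp only
        module
    have hball : Metric.closedBall (c i + (1/2 : ℝ) • (c (i + 1) - c i)) (‖c (i + 1) - c i‖ / 2) ⊆ Ω := by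
      apply hballs _ hmid
      rw [hnd]
      calc r / N / 2 = r / (2 * N) := by ring
        _ < δ := hstep
    have := aux_local hlam (P (c i)) (P (c (i + 1))) (hP (c i) hci) (hP (c (i + 1)) hci1)
      hnexy hball
    calc ‖P (c i) - P (c (i + 1))‖ ≤ lam * ‖c i - c (i + 1)‖ := this
      _ = lam * (r / N) := by rw [norm_sub_rev, hnd]
  -- telescope
  have hc0 : c 0 = x := by simp [hcdef]
  have hcN : c N = y := by
    rw [hcdef]
    simp only [div_self (ne_of_gt hNpos)]
    rw [one_smul, hddef]
    abel
  have htel := dist_le_range_sum_dist (fun i => P (c i)) N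
  rw [hc0, hcN] at htel
  have hsum : ∑ i ∈ Finset.range N, dist (P (c i)) (P (c (i + 1))) ≤ N * (lam * (r / N)) := by
    calc ∑ i ∈ Finset.range N, dist (P (c i)) (P (c (i + 1)))
        ≤ ∑ _i ∈ Finset.range N, lam * (r / N) := by
          apply Finset.sum_le_sum
          intro i hi
          rw [dist_eq_norm]
          exact hstepest i (Finset.mem_range.1 hi)
      _ = N * (lam * (r / N)) := by
          rw [Finset.sum_const, Finset.card_range, nsmul_eq_mul]
  have hfin : (N : ℝ) * (lam * (r / N)) = lam * r := by
    field_simp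
  rw [← dist_eq_norm, hrdef]
  calc dist (P x) (P y) ≤ N * (lam * (r / N)) := le_trans htel hsum
    _ = lam * r := hfin

set_option maxHeartbeats 2000000 in
lemma aux_fwd {Ω : Set F} (hΩ : IsOpen Ω) (hconv : Convex ℝ Ω) {lam : ℝ} (hlam : 0 ≤ lam)
    {u : F → ℝ} (hd : ∀ x ∈ Ω, DifferentiableAt ℝ u x)
    (hl : ∀ x ∈ Ω, ∀ y ∈ Ω, ‖fderiv ℝ u x - fderiv ℝ u y‖ ≤ lam * ‖x - y‖) :
    ConvexOn ℝ Ω (fun x => u x + lam / 2 * ‖x‖ ^ 2) := by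
  refine ⟨hconv, ?_⟩
  intro x hx y hy a b ha hb hab
  set v : F := y - x with hvdef
  set c : ℝ → F := fun t => x + t • v with hcdef
  have hmem : ∀ t ∈ Set.Icc (0:ℝ) 1, c t ∈ Ω := fun t ht =>
    hconv.add_smul_sub_mem hx hy ht
  set φ : ℝ → ℝ := fun t => u (c t) + lam / 2 * ‖c t‖ ^ 2 with hφdef
  have hcderiv : ∀ t : ℝ, HasDerivAt c v t := by
    intro t
    have h1 : HasDerivAt (fun t : ℝ => t • v) ((1:ℝ) • v) t :=
      (hasDerivAt_id t).smul_const v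
    rw [one_smul] at h1
    exact h1.const_add x
  have hinner : ∀ t : ℝ, ‖c t‖ ^ 2 = ‖x‖ ^ 2 + 2 * ⟪x, v⟫ * t + ‖v‖ ^ 2 * t ^ 2 := by
    intro t
    rw [hcdef]
    simp only
    rw [norm_add_sq_real, real_inner_smul_right, norm_smul, Real.norm_eq_abs, mul_pow, sq_abs]
    ring
  have hφderiv : ∀ t : ℝ, c t ∈ Ω →
      HasDerivAt φ (fderiv ℝ u (c t) v + lam * ⟪x, v⟫ + lam * ‖v‖ ^ 2 * t) t := by
    intro t htΩ
    have h1 : HasDerivAt (fun t => u (c t)) (fderiv ℝ u (c t) v) t :=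
      (hd _ htΩ).hasFDerivAt.comp_hasDerivAt t (hcderiv t)
    have h2 : HasDerivAt (fun t : ℝ => lam / 2 * ‖c t‖ ^ 2)
        (lam * ⟪x, v⟫ + lam * ‖v‖ ^ 2 * t) t := by
      have h3 : (fun t : ℝ => lam / 2 * ‖c t‖ ^ 2)
          = fun t : ℝ => lam / 2 * (‖x‖ ^ 2 + 2 * ⟪x, v⟫ * t + ‖v‖ ^ 2 * t ^ 2) := by
        funext t; rw [hinner t]
      rw [h3]
      have h4 : HasDerivAt (fun t : ℝ => ‖x‖ ^ 2 + 2 * ⟪x, v⟫ * t + ‖v‖ ^ 2 * t ^ 2)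
          (2 * ⟪x, v⟫ + ‖v‖ ^ 2 * (2 * t)) t := by
        have ha1 : HasDerivAt (fun t : ℝ => 2 * ⟪x, v⟫ * t) (2 * ⟪x, v⟫) t := by
          simpa using (hasDerivAt_id t).const_mul (2 * ⟪x, v⟫)
        have ha2 : HasDerivAt (fun t : ℝ => ‖v‖ ^ 2 * t ^ 2) (‖v‖ ^ 2 * (2 * t)) t := by
          have := (hasDerivAt_pow 2 t).const_mul (‖v‖ ^ 2)
          simpa using this
        exact (ha1.const_add (‖x‖ ^ 2)).add ha2
      have := h4.const_mul (lam / 2)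
      refine this.congr_deriv ?_
      ring
    have := h1.add h2
    refine this.congr_deriv ?_
    ring
  have hφconv : ConvexOn ℝ (Set.Icc (0:ℝ) 1) φ := by
    apply MonotoneOn.convexOn_of_deriv (convex_Icc 0 1)
    · -- continuity
      intro t ht
      have htΩ := hmem t ht
      have : ContinuousAt φ t := by
        have h1 : ContinuousAt c t := (hcderiv t).continuousAt
        have h2 : ContinuousAt u (c t) := (hd _ htΩ).continuousAt
        have h3 : ContinuousAt (fun t => u (c t)) t := h2.comp h1
        have h4 : ContinuousAt (fun t => lam / 2 * ‖c t‖ ^ 2) t := by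
          exact (continuousAt_const.mul (((h1.norm).pow 2)))
        exact h3.add h4
      exact this.continuousWithinAt
    · -- differentiability on interior
      rw [interior_Icc]
      intro t ht
      have htΩ := hmem t (Set.mem_Icc_of_Ioo ht)
      exact ((hφderiv t htΩ).differentiableAt).differentiableWithinAt
    · -- monotone derivative
      rw [interior_Icc]
      intro s hs t ht hst
      have hsΩ := hmem s (Set.mem_Icc_of_Ioo hs)
      have htΩ := hmem t (Set.mem_Icc_of_Ioo ht)
      rw [(hφderiv s hsΩ).deriv, (hφderiv t htΩ).deriv]
      have hkey : (fderiv ℝ u (c s) - fderiv ℝ u (c t)) v ≤ lam * (t - s) * ‖v‖ ^ 2 := by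
        calc (fderiv ℝ u (c s) - fderiv ℝ u (c t)) v
            ≤ ‖(fderiv ℝ u (c s) - fderiv ℝ u (c t)) v‖ := le_abs_self _
          _ ≤ ‖fderiv ℝ u (c s) - fderiv ℝ u (c t)‖ * ‖v‖ :=
              ContinuousLinearMap.le_opNorm _ v
          _ ≤ (lam * ‖c s - c t‖) * ‖v‖ := by
              apply mul_le_mul_of_nonneg_right (hl _ hsΩ _ htΩ) (norm_nonneg v)
          _ = lam * (t - s) * ‖v‖ ^ 2 := by
              have : c s - c t = -((t - s) • v) := by rw [hcdef]; module
              rw [this, norm_neg, norm_smul, Real.norm_eq_abs, abs_of_nonneg (by linarith)]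
              ring
      have hsub : (fderiv ℝ u (c s) - fderiv ℝ u (c t)) v
          = fderiv ℝ u (c s) v - fderiv ℝ u (c t) v := by simp
      rw [hsub] at hkey
      linarith
  -- conclude
  have h01 : (0:ℝ) ∈ Set.Icc (0:ℝ) 1 := by norm_num
  have h11 : (1:ℝ) ∈ Set.Icc (0:ℝ) 1 := by norm_num
  have := hφconv.2 h01 h11 ha hb hab
  simp only [smul_eq_mul, mul_zero, mul_one, zero_add] at this
  have hφ0 : φ 0 = u x + lam / 2 * ‖x‖ ^ 2 := by
    rw [hφdef]; simp [hcdef]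
  have hφb : φ b = u (a • x + b • y) + lam / 2 * ‖a • x + b • y‖ ^ 2 := by
    have hxy : a • x + b • y = c b := by
      rw [hcdef]
      simp only [hvdef]
      have hab' : a = 1 - b := by linarith
      rw [hab']
      module
    rw [hφdef, hxy]
  have hφ1 : φ 1 = u y + lam / 2 * ‖y‖ ^ 2 := by
    rw [hφdef]
    have h5 : c 1 = y := by rw [hcdef]; simp [hvdef]
    simp only [h5]
  simp only [smul_eq_mul]
  rw [← hφ0, ← hφ1, ← hφb]
  exact this

theorem stmt19 (n : ℕ) (Ω : Set (EuclideanSpace ℝ (Fin n)))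
    (hΩ : IsOpen Ω) (hconv : Convex ℝ Ω) (lam : ℝ) (hlam : 0 ≤ lam)
    (u : EuclideanSpace ℝ (Fin n) → ℝ) :
    ((∀ x ∈ Ω, DifferentiableAt ℝ u x) ∧
        ∀ x ∈ Ω, ∀ y ∈ Ω, ‖fderiv ℝ u x - fderiv ℝ u y‖ ≤ lam * ‖x - y‖) ↔
      (ConvexOn ℝ Ω (fun x => u x + lam / 2 * ‖x‖ ^ 2) ∧
        ConvexOn ℝ Ω (fun x => -u x + lam / 2 * ‖x‖ ^ 2)) := by
  constructor
  · rintro ⟨hd, hl⟩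
    refine ⟨aux_fwd hΩ hconv hlam hd hl, ?_⟩
    have hd' : ∀ x ∈ Ω, DifferentiableAt ℝ (fun x => -u x) x := fun x hx => (hd x hx).neg
    have hl' : ∀ x ∈ Ω, ∀ y ∈ Ω,
        ‖fderiv ℝ (fun x => -u x) x - fderiv ℝ (fun x => -u x) y‖ ≤ lam * ‖x - y‖ := by
      intro x hx y hy
      rw [fderiv_fun_neg, fderiv_fun_neg, neg_sub_neg, norm_sub_rev]
      exact hl x hx y hy
    exact aux_fwd hΩ hconv hlam hd' hl'
  · rintro ⟨hg, hh⟩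
    have key : ∀ x ∈ Ω, HasFDerivAt u (fderiv ℝ u x) x ∧
        ∀ z ∈ Ω, |u z - u x - (fderiv ℝ u x) (z - x)| ≤ lam / 2 * ‖z - x‖ ^ 2 := by
      intro x hx
      obtain ⟨L, hL, hs⟩ := aux_diff hΩ hconv hlam hg hh hx
      have hf : fderiv ℝ u x = L := hL.fderiv
      rw [hf]
      exact ⟨hL, hs⟩
    refine ⟨fun x hx => ((key x hx).1).differentiableAt, ?_⟩
    intro x hx y hy
    exact aux_global hΩ hconv hlam (fun x => fderiv ℝ u x) (fun x hx => (key x hx).2) hx hy
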